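/- Fix a positive integer n. There exists a constant C = C(n) > 0 with the following property. Let d ∈ {1,2} and let Q be a nonnegative half-integer. Let p be the monic polynomial whose roots, each simple, are exactly the points s₀ ∈ ℂ with |Re(s₀)| ≤ n at which (d/2)(Q + 1/2 − s₀) is a nonpositive integer, and let p^∨ be the monic polynomial whose roots, each simple, are exactly the points s₀ ∈ ℂ with |Re(s₀)| ≤ n at which (d/2)(Q + 1/2 + s₀) is a nonpositive integer. Then for every s ∈ ℂ with |Re(s)| ≤ n such that neither (d/2)(Q + 1/2 − s) nor (d/2)(Q + 1/2 + s) is a nonpositive integer, one has |p(s) · Γ((d/2)(Q + 1/2 − s))| ≤ C · (1 + |p(s)|) · |Q + 1 + s + 2n|^{nd+2} · |p^∨(s) · Γ((d/2)(Q + 1/2 + s))|. -/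

import Mathlib

open MeasureTheory Set

lemma exp_two_le : Real.exp 2 ≤ 8 := by
  have h := Real.exp_one_lt_d9
  calc Real.exp 2 = Real.exp 1 ^ (2:ℕ) := by rw [← Real.exp_nat_mul]; norm_num
    _ ≤ 2.7182818286 ^ (2:ℕ) := pow_le_pow_left₀ (Real.exp_nonneg 1) h.le 2
    _ ≤ 8 := by norm_num

lemma pointwise_low (y t : ℝ) (hy : 1/4 ≤ y) (ht : t ∈ Ioc (1:ℝ) 2) :
    (1/16 : ℝ) ≤ Real.exp (-t) * t ^ (y - 1) := by
  have h1 : (1:ℝ) < t := ht.1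
  have h2 : t ≤ 2 := ht.2
  have h0t : (0:ℝ) < t := by linarith
  have he : (1/8 : ℝ) ≤ Real.exp (-t) := by
    rw [Real.exp_neg, inv_eq_one_div]
    exact one_div_le_one_div_of_le (Real.exp_pos t)
      ((Real.exp_le_exp.mpr h2).trans exp_two_le)
  have ht' : (1/2 : ℝ) ≤ t ^ (y - 1) := by
    rcases le_or_gt 1 y with h | h
    · have : (1:ℝ) ≤ t ^ (y-1) := Real.one_le_rpow h1.le (by linarith)
      linarith
    · have hb : (2:ℝ) ^ (y-1) ≤ t ^ (y-1) := by
        rw [show y-1 = -(1-y) by ring, Real.rpow_neg (by norm_num : (0:ℝ) ≤ 2),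
          Real.rpow_neg h0t.le]
        exact inv_anti₀ (Real.rpow_pos_of_pos h0t _)
          (Real.rpow_le_rpow h0t.le h2 (by linarith))
      have h12 : (1/2:ℝ) ≤ (2:ℝ) ^ (y-1) := by
        have := Real.rpow_le_rpow_of_exponent_le (by norm_num : (1:ℝ) ≤ 2)
          (by linarith : (-1:ℝ) ≤ y - 1)
        rw [Real.rpow_neg_one] at this
        linarith
      linarith
  calc (1/16 : ℝ) = (1/8) * (1/2) := by norm_num
    _ ≤ Real.exp (-t) * t ^ (y-1) :=
        mul_le_mul he ht' (by norm_num) (Real.exp_nonneg _)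

lemma gamma_lower (y : ℝ) (hy : 1/4 ≤ y) : 1/16 ≤ Real.Gamma y := by
  have hy0 : 0 < y := by linarith
  rw [Real.Gamma_eq_integral hy0]
  have hint : IntegrableOn (fun t => Real.exp (-t) * t ^ (y-1)) (Ioi 0) :=
    Real.GammaIntegral_convergent hy0
  have hsub : Ioc (1:ℝ) 2 ⊆ Ioi 0 := fun t ht => by
    simp only [mem_Ioi]; exact lt_trans one_pos ht.1
  calc (1/16 : ℝ) = ∫ _ in Ioc (1:ℝ) 2, (1/16 : ℝ) := by
        rw [setIntegral_const]
        simp [Real.volume_Ioc]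
        norm_num
    _ ≤ ∫ t in Ioc (1:ℝ) 2, Real.exp (-t) * t ^ (y-1) := by
        apply setIntegral_mono_on (integrableOn_const (by simp [Real.volume_Ioc]))
          (hint.mono_set hsub) measurableSet_Ioc
        exact fun t ht => pointwise_low y t hy ht
    _ ≤ ∫ t in Ioi (0:ℝ), Real.exp (-t) * t ^ (y-1) := by
        apply setIntegral_mono_set hint
        · filter_upwards [ae_restrict_mem measurableSet_Ioi] with t ht using by
            have : (0:ℝ) < t := ht
            positivity
        · exact HasSubset.Subset.eventuallyLE hsub

lemma gamma_split (x δ : ℝ) (hx : 0 < x) (hδ : 0 ≤ δ) :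
    Real.Gamma x ≤ 1/x + Real.Gamma (x + δ) := by
  have hxδ : 0 < x + δ := by linarith
  rw [Real.Gamma_eq_integral hx, Real.Gamma_eq_integral hxδ]
  have hint : IntegrableOn (fun t => Real.exp (-t) * t ^ (x-1)) (Ioi 0) :=
    Real.GammaIntegral_convergent hx
  have hint2 : IntegrableOn (fun t => Real.exp (-t) * t ^ (x+δ-1)) (Ioi 0) :=
    Real.GammaIntegral_convergent hxδ
  have hunion : Ioc (0:ℝ) 1 ∪ Ioi 1 = Ioi 0 := Ioc_union_Ioi_eq_Ioi zero_le_one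
  have hdisj : Disjoint (Ioc (0:ℝ) 1) (Ioi 1) := Ioc_disjoint_Ioi le_rfl
  have hsplit : ∫ t in Ioi (0:ℝ), Real.exp (-t) * t ^ (x-1)
      = (∫ t in Ioc (0:ℝ) 1, Real.exp (-t) * t ^ (x-1))
        + ∫ t in Ioi (1:ℝ), Real.exp (-t) * t ^ (x-1) := by
    rw [← setIntegral_union hdisj measurableSet_Ioi
      (hint.mono_set (by rw [← hunion]; exact subset_union_left))
      (hint.mono_set (by rw [← hunion]; exact subset_union_right)), hunion]
  rw [hsplit]
  have h1 : ∫ t in Ioc (0:ℝ) 1, Real.exp (-t) * t ^ (x-1) ≤ 1/x := by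
    have hrint : IntegrableOn (fun t : ℝ => t ^ (x-1)) (Ioc (0:ℝ) 1) := by
      rw [← intervalIntegrable_iff_integrableOn_Ioc_of_le zero_le_one]
      apply intervalIntegral.intervalIntegrable_rpow'
      linarith
    have : ∫ t in Ioc (0:ℝ) 1, Real.exp (-t) * t ^ (x-1)
        ≤ ∫ t in Ioc (0:ℝ) 1, t ^ (x-1) := by
      apply setIntegral_mono_on (hint.mono_set (by rw [← hunion]; exact subset_union_left))
        hrint measurableSet_Ioc
      intro t ht
      have h0t : 0 < t := ht.1
      have : Real.exp (-t) ≤ 1 := Real.exp_le_one_iff.mpr (by linarith)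
      nlinarith [Real.rpow_pos_of_pos h0t (x-1)]
    refine this.trans ?_
    rw [← intervalIntegral.integral_of_le zero_le_one,
      integral_rpow (Or.inl (by linarith : (-1:ℝ) < x - 1))]
    rw [Real.zero_rpow (by linarith : x - 1 + 1 ≠ 0), Real.one_rpow]
    norm_num
  have h2 : ∫ t in Ioi (1:ℝ), Real.exp (-t) * t ^ (x-1)
      ≤ ∫ t in Ioi (0:ℝ), Real.exp (-t) * t ^ (x+δ-1) := by
    have step1 : ∫ t in Ioi (1:ℝ), Real.exp (-t) * t ^ (x-1)
        ≤ ∫ t in Ioi (1:ℝ), Real.exp (-t) * t ^ (x+δ-1) := by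
      apply setIntegral_mono_on
        (hint.mono_set (fun t (ht : t ∈ Ioi (1:ℝ)) => mem_Ioi.mpr (lt_trans one_pos (mem_Ioi.mp ht))))
        (hint2.mono_set (fun t (ht : t ∈ Ioi (1:ℝ)) => mem_Ioi.mpr (lt_trans one_pos (mem_Ioi.mp ht)))) measurableSet_Ioi
      intro t ht
      have h1t : (1:ℝ) ≤ t := le_of_lt ht
      have := Real.rpow_le_rpow_of_exponent_le h1t (by linarith : x - 1 ≤ x + δ - 1)
      nlinarith [Real.exp_pos (-t)]
    refine step1.trans ?_
    apply setIntegral_mono_set hint2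
    · filter_upwards [ae_restrict_mem measurableSet_Ioi] with t ht using by
        have : (0:ℝ) < t := ht
        positivity
    · exact HasSubset.Subset.eventuallyLE (fun t (ht : t ∈ Ioi (1:ℝ)) => mem_Ioi.mpr (lt_trans one_pos (mem_Ioi.mp ht)))
  linarith

lemma gamma_ratio (x δ : ℝ) (hx : 1/4 ≤ x) (hδ : 0 ≤ δ) :
    Real.Gamma x ≤ 65 * Real.Gamma (x + δ) := by
  have h0 : 0 < x := by linarith
  have h1 := gamma_split x δ h0 hδ
  have h2 := gamma_lower (x + δ) (by linarith)
  have h3 : 1/x ≤ 4 := by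
    rw [div_le_iff₀ h0]; linarith
  linarith

open Complex in
lemma frac_ascent (z : ℂ) (δ : ℝ) (hz : 1/4 ≤ z.re) (h0 : 0 < δ) (h1 : δ ≤ 1) :
    ‖Complex.Gamma z‖ ≤ 65 * ‖Complex.Gamma (z + (δ:ℂ))‖ := by
  set x : ℝ := z.re with hxdef
  have hx : (0:ℝ) < x := by linarith
  have hδre : (0:ℝ) < (δ:ℂ).re := by simpa using h0
  have hzre : (0:ℝ) < z.re := hx
  have hxre : (0:ℝ) < ((x:ℂ)).re := by simpa using hx
  -- the two integrands
  set fz : ℝ → ℂ := fun t => (t:ℂ) ^ (z - 1) * (1 - (t:ℂ)) ^ ((δ:ℂ) - 1) with hfz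
  set fx : ℝ → ℂ := fun t => (t:ℂ) ^ ((x:ℂ) - 1) * (1 - (t:ℂ)) ^ ((δ:ℂ) - 1) with hfx
  have hIz : IntervalIntegrable fz MeasureTheory.volume 0 1 :=
    Complex.betaIntegral_convergent hzre hδre
  have hIx : IntervalIntegrable fx MeasureTheory.volume 0 1 :=
    Complex.betaIntegral_convergent hxre hδre
  -- pointwise norm comparison on [0,1]
  have hptv : ∀ t ∈ Set.Icc (0:ℝ) 1, ‖fz t‖ ≤ ‖fx t‖ := by
    intro t ht
    rcases eq_or_lt_of_le ht.1 with h | h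
    · -- t = 0
      by_cases hz1 : z = 1
      · have hx1 : (x:ℂ) = 1 := by rw [hxdef, hz1]; simp
        simp only [hfz, hfx, hz1, hx1]
        exact le_rfl
      · have hz0 : fz t = 0 := by
          simp only [hfz, ← h, Complex.ofReal_zero]
          rw [Complex.zero_cpow (sub_ne_zero.mpr hz1), zero_mul]
        rw [hz0, norm_zero]
        exact norm_nonneg _
    · -- 0 < t
      have heq : ‖fz t‖ = ‖fx t‖ := by
        simp only [hfz, hfx]
        simp only [norm_mul]
        congr 1
        rw [Complex.norm_cpow_eq_rpow_re_of_pos h, Complex.norm_cpow_eq_rpow_re_of_pos h]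
        norm_num [hxdef]
      exact le_of_eq heq
  have hnorm1 : ‖Complex.betaIntegral z δ‖ ≤ ∫ t in (0:ℝ)..1, ‖fx t‖ := by
    calc ‖Complex.betaIntegral z δ‖ ≤ ∫ t in (0:ℝ)..1, ‖fz t‖ :=
          intervalIntegral.norm_integral_le_integral_norm zero_le_one
      _ ≤ ∫ t in (0:ℝ)..1, ‖fx t‖ := by
          apply intervalIntegral.integral_mono_on zero_le_one hIz.norm hIx.norm hptv
  -- evaluate ∫ ‖fx‖ as a real Beta value
  set Breal : ℝ := Real.Gamma x * Real.Gamma δ / Real.Gamma (x + δ) with hBreal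
  have hGxδ : (0:ℝ) < Real.Gamma (x + δ) := Real.Gamma_pos_of_pos (by linarith)
  have hGδ : (0:ℝ) < Real.Gamma δ := Real.Gamma_pos_of_pos h0
  have hGx : (0:ℝ) < Real.Gamma x := Real.Gamma_pos_of_pos hx
  set g : ℝ → ℝ := fun t => t ^ (x - 1) * (1 - t) ^ (δ - 1) with hg
  have hcast : ∀ t ∈ Set.uIcc (0:ℝ) 1, fx t = ((g t : ℝ) : ℂ) := by
    intro t ht
    rw [Set.uIcc_of_le zero_le_one] at ht
    simp only [hfx, hg]
    push_cast [Complex.ofReal_cpow ht.1, Complex.ofReal_cpow (by linarith [ht.2] : (0:ℝ) ≤ 1 - t)]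
    norm_num
  have hgnorm : ∀ t ∈ Set.uIcc (0:ℝ) 1, ‖fx t‖ = g t := by
    intro t ht
    have h1' := hcast t ht
    rw [Set.uIcc_of_le zero_le_one] at ht
    rw [h1']
    rw [Complex.norm_real, Real.norm_eq_abs, _root_.abs_of_nonneg]
    simp only [hg]
    exact mul_nonneg (Real.rpow_nonneg ht.1 _)
      (Real.rpow_nonneg (by linarith [ht.2]) _)
  have hint_fx : ∫ t in (0:ℝ)..1, fx t = ((∫ t in (0:ℝ)..1, g t : ℝ) : ℂ) := by
    rw [intervalIntegral.integral_congr hcast, intervalIntegral.integral_ofReal]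
  have hbeta_x : Complex.betaIntegral (x:ℂ) (δ:ℂ) = ((Breal : ℝ) : ℂ) := by
    have hid := Complex.Gamma_mul_Gamma_eq_betaIntegral hxre hδre
    rw [← Complex.ofReal_add, Complex.Gamma_ofReal, Complex.Gamma_ofReal,
      Complex.Gamma_ofReal] at hid
    have hne : ((Real.Gamma (x+δ) : ℝ) : ℂ) ≠ 0 := by
      simpa using hGxδ.ne'
    rw [hBreal, Complex.ofReal_div, Complex.ofReal_mul, eq_div_iff hne]
    linear_combination -hid
  have hint_norm : ∫ t in (0:ℝ)..1, ‖fx t‖ = Breal := by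
    have : ∫ t in (0:ℝ)..1, ‖fx t‖ = ∫ t in (0:ℝ)..1, g t :=
      intervalIntegral.integral_congr hgnorm
    rw [this]
    have : ((∫ t in (0:ℝ)..1, g t : ℝ) : ℂ) = ((Breal : ℝ) : ℂ) := by
      rw [← hint_fx]
      exact hbeta_x.symm ▸ rfl
    exact_mod_cast this
  -- main identity
  have hid := Complex.Gamma_mul_Gamma_eq_betaIntegral hzre hδre
  have hnormid : ‖Complex.Gamma z‖ * Real.Gamma δ ≤ ‖Complex.Gamma (z + (δ:ℂ))‖ * Breal := by
    calc ‖Complex.Gamma z‖ * Real.Gamma δ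
        = ‖Complex.Gamma z * Complex.Gamma (δ:ℂ)‖ := by
          rw [norm_mul, Complex.Gamma_ofReal, Complex.norm_real, Real.norm_eq_abs,
            abs_of_pos hGδ]
      _ = ‖Complex.Gamma (z + (δ:ℂ)) * Complex.betaIntegral z (δ:ℂ)‖ := by rw [hid]
      _ ≤ ‖Complex.Gamma (z + (δ:ℂ))‖ * Breal := by
          rw [norm_mul]
          exact mul_le_mul_of_nonneg_left (hnorm1.trans hint_norm.le) (norm_nonneg _)
  have hratio : Real.Gamma x ≤ 65 * Real.Gamma (x + δ) := gamma_ratio x δ hz h0.le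
  have hBle : Breal ≤ 65 * Real.Gamma δ := by
    rw [hBreal, div_le_iff₀ hGxδ]
    calc Real.Gamma x * Real.Gamma δ ≤ (65 * Real.Gamma (x+δ)) * Real.Gamma δ := by
          exact mul_le_mul_of_nonneg_right hratio hGδ.le
      _ = 65 * Real.Gamma δ * Real.Gamma (x+δ) := by ring
  have := hnormid.trans (mul_le_mul_of_nonneg_left hBle (norm_nonneg _))
  have h65 : ‖Complex.Gamma (z + (δ:ℂ))‖ * (65 * Real.Gamma δ)
      = (65 * ‖Complex.Gamma (z + (δ:ℂ))‖) * Real.Gamma δ := by ring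
  rw [h65] at this
  exact le_of_mul_le_mul_right this hGδ

lemma one_step_ascent (z : ℂ) (hz : 1/4 ≤ z.re) :
    ‖Complex.Gamma z‖ ≤ 4 * ‖Complex.Gamma (z + 1)‖ := by
  have hz0 : z ≠ 0 := by
    intro h; rw [h] at hz; norm_num at hz
  have h := Complex.Gamma_add_one z hz0
  have hnz : 1/4 ≤ ‖z‖ := by
    exact le_trans hz ((le_abs_self _).trans (Complex.abs_re_le_norm z))
  rw [h, norm_mul]
  nlinarith [norm_nonneg (Complex.Gamma z), norm_nonneg z]

lemma int_ascent (M : ℕ) (z : ℂ) (hz : 1/4 ≤ z.re) :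
    ‖Complex.Gamma z‖ ≤ 4 ^ M * ‖Complex.Gamma (z + M)‖ := by
  induction M generalizing z with
  | zero => simp
  | succ M ih =>
    have h1 : ‖Complex.Gamma z‖ ≤ 4 * ‖Complex.Gamma (z + 1)‖ := one_step_ascent z hz
    have h2 : ‖Complex.Gamma (z+1)‖ ≤ 4 ^ M * ‖Complex.Gamma (z + 1 + M)‖ :=
      ih (z+1) (by simp; linarith)
    have he : z + 1 + (M:ℂ) = z + (M+1 : ℕ) := by push_cast; ring
    rw [he] at h2
    calc ‖Complex.Gamma z‖ ≤ 4 * ‖Complex.Gamma (z + 1)‖ := h1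
      _ ≤ 4 * (4 ^ M * ‖Complex.Gamma (z + (M+1:ℕ))‖) := by linarith
      _ = 4 ^ (M+1) * ‖Complex.Gamma (z + (M+1:ℕ))‖ := by ring

lemma int_descent (M : ℕ) (z : ℂ) (hz : 1/4 ≤ z.re) :
    ‖Complex.Gamma (z + M)‖ ≤ (‖z‖ + M) ^ M * ‖Complex.Gamma z‖ := by
  induction M with
  | zero => simp
  | succ M ih =>
    have hz0 : z + (M:ℂ) ≠ 0 := by
      intro h
      have : (z + (M:ℂ)).re = 0 := by rw [h]; simp
      simp at this
      have : (0:ℝ) ≤ (M:ℝ) := Nat.cast_nonneg M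
      linarith
    have he : z + ((M:ℕ)+1 : ℕ) = (z + M) + 1 := by push_cast; ring
    rw [he, Complex.Gamma_add_one _ hz0, norm_mul]
    have hb : ‖z + (M:ℂ)‖ ≤ ‖z‖ + M := by
      calc ‖z + (M:ℂ)‖ ≤ ‖z‖ + ‖(M:ℂ)‖ := norm_add_le _ _
        _ = ‖z‖ + M := by simp
    have hmono : (‖z‖ + M) ^ M ≤ (‖z‖ + (M+1:ℕ)) ^ M := by
      apply pow_le_pow_left₀ (by positivity)
      push_cast; linarith
    calc ‖z + (M:ℂ)‖ * ‖Complex.Gamma (z + M)‖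
        ≤ (‖z‖ + M) * ((‖z‖ + M) ^ M * ‖Complex.Gamma z‖) := by
          apply mul_le_mul hb ih (norm_nonneg _) (by positivity)
      _ ≤ (‖z‖ + (M+1:ℕ)) * ((‖z‖ + (M+1:ℕ)) ^ M * ‖Complex.Gamma z‖) := by
          have h1 : (‖z‖ + (M:ℝ)) ≤ (‖z‖ + ((M+1:ℕ):ℝ)) := by push_cast; linarith
          have hGn := norm_nonneg (Complex.Gamma z)
          apply mul_le_mul h1 (mul_le_mul hmono le_rfl hGn (by positivity))
            (by positivity) (by positivity)
      _ = (‖z‖ + (M+1:ℕ)) ^ (M+1) * ‖Complex.Gamma z‖ := by ring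

lemma main_compare (N : ℕ) (z w : ℂ) (him : z.im = w.im)
    (hz : 1/4 ≤ z.re) (hw : 1/4 ≤ w.re) (hd : |z.re - w.re| ≤ N) :
    ‖Complex.Gamma z‖ ≤ 65 * 4 ^ N * (‖w‖ + N + 1) ^ (N + 1) * ‖Complex.Gamma w‖ := by
  have hbase1 : (1:ℝ) ≤ ‖w‖ + N + 1 := by
    have h1 := norm_nonneg w
    have h2 : (0:ℝ) ≤ (N:ℝ) := Nat.cast_nonneg N
    linarith
  have hpow1 : (1:ℝ) ≤ (‖w‖ + N + 1) ^ (N+1) := one_le_pow₀ hbase1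
  rcases le_or_gt z.re w.re with hle | hlt
  · -- ascending case
    set τ : ℝ := w.re - z.re with hτ
    have hτ0 : 0 ≤ τ := by simp [hτ]; linarith
    have hτN : τ ≤ N := by rw [abs_le] at hd; linarith [hd.1]
    set M : ℕ := ⌊τ⌋₊ with hM
    set δ : ℝ := τ - M with hδ
    have hδ0 : 0 ≤ δ := by simp [hδ]; exact Nat.floor_le hτ0
    have hδ1 : δ < 1 := by
      simp [hδ]
      have := Nat.lt_floor_add_one τ
      linarith
    have hMN : M ≤ N := by
      have : (M:ℝ) ≤ (N:ℝ) := le_trans (Nat.floor_le hτ0) hτN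
      exact_mod_cast this
    have hweq : w = z + (δ:ℂ) + (M:ℂ) := by
      apply Complex.ext <;> simp [hδ, him] <;> ring
    have step : ‖Complex.Gamma z‖ ≤ 65 * 4 ^ M * ‖Complex.Gamma w‖ := by
      rcases eq_or_lt_of_le hδ0 with h0 | h0
      · have hweq' : w = z + (M:ℂ) := by rw [hweq, ← h0]; simp
        have := int_ascent M z hz
        rw [← hweq'] at this
        nlinarith [norm_nonneg (Complex.Gamma w), pow_pos (by norm_num : (0:ℝ) < 4) M,
          norm_nonneg (Complex.Gamma z)]
      · have h1 : ‖Complex.Gamma z‖ ≤ 65 * ‖Complex.Gamma (z + (δ:ℂ))‖ :=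
          frac_ascent z δ hz h0 hδ1.le
        have h2 : ‖Complex.Gamma (z + (δ:ℂ))‖ ≤ 4 ^ M * ‖Complex.Gamma (z + (δ:ℂ) + M)‖ :=
          int_ascent M _ (by simp; linarith)
        rw [← hweq] at h2
        calc ‖Complex.Gamma z‖ ≤ 65 * ‖Complex.Gamma (z + (δ:ℂ))‖ := h1
          _ ≤ 65 * (4 ^ M * ‖Complex.Gamma w‖) := by linarith
          _ = 65 * 4 ^ M * ‖Complex.Gamma w‖ := by ring
    calc ‖Complex.Gamma z‖ ≤ 65 * 4 ^ M * ‖Complex.Gamma w‖ := step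
      _ ≤ 65 * 4 ^ N * (‖w‖ + N + 1) ^ (N+1) * ‖Complex.Gamma w‖ := by
          have h4 : (4:ℝ) ^ M ≤ 4 ^ N := pow_le_pow_right₀ (by norm_num) hMN
          nlinarith [mul_nonneg (sub_nonneg.mpr h4) (norm_nonneg (Complex.Gamma w)),
            mul_nonneg (mul_nonneg (by positivity : (0:ℝ) ≤ 65 * 4 ^ N)
              (sub_nonneg.mpr hpow1)) (norm_nonneg (Complex.Gamma w))]
  · -- descending case
    set τ : ℝ := z.re - w.re with hτ
    have hτ0 : 0 ≤ τ := by simp [hτ]; linarith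
    have hτN : τ ≤ N := by rw [abs_le] at hd; linarith [hd.2]
    set M : ℕ := ⌊τ⌋₊ with hM
    set δ : ℝ := τ - M with hδ
    have hδ0 : 0 ≤ δ := by simp [hδ]; exact Nat.floor_le hτ0
    have hδ1 : δ < 1 := by
      simp [hδ]
      have := Nat.lt_floor_add_one τ
      linarith
    have hMN : M ≤ N := by
      have : (M:ℝ) ≤ (N:ℝ) := le_trans (Nat.floor_le hτ0) hτN
      exact_mod_cast this
    have hzeq : z = w + (δ:ℂ) + (M:ℂ) := by
      apply Complex.ext <;> simp [hδ, him] <;> ring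
    have hwδre : 1/4 ≤ (w + (δ:ℂ)).re := by simp; linarith
    have h1 : ‖Complex.Gamma z‖ ≤ (‖w + (δ:ℂ)‖ + M) ^ M * ‖Complex.Gamma (w + (δ:ℂ))‖ := by
      rw [hzeq]; exact int_descent M _ hwδre
    have h2 : ‖Complex.Gamma (w + (δ:ℂ))‖ ≤ 65 * ‖Complex.Gamma (w + 1)‖ := by
      have := frac_ascent (w + (δ:ℂ)) (1 - δ) hwδre (by linarith) (by linarith)
      have he : w + (δ:ℂ) + ((1 - δ : ℝ):ℂ) = w + 1 := by push_cast; ring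
      rwa [he] at this
    have hw0 : w ≠ 0 := by
      intro h; rw [h] at hw; norm_num at hw
    have h3 : ‖Complex.Gamma (w + 1)‖ = ‖w‖ * ‖Complex.Gamma w‖ := by
      rw [Complex.Gamma_add_one w hw0, norm_mul]
    have hbound : ‖w + (δ:ℂ)‖ + M ≤ ‖w‖ + N + 1 := by
      have : ‖w + (δ:ℂ)‖ ≤ ‖w‖ + 1 := by
        calc ‖w + (δ:ℂ)‖ ≤ ‖w‖ + ‖((δ:ℝ):ℂ)‖ := norm_add_le _ _
          _ ≤ ‖w‖ + 1 := by
              rw [Complex.norm_real, Real.norm_eq_abs, _root_.abs_of_nonneg hδ0]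
              linarith
      have hMN' : (M:ℝ) ≤ (N:ℝ) := by exact_mod_cast hMN
      linarith
    have hwle : ‖w‖ ≤ ‖w‖ + N + 1 := by
      have : (0:ℝ) ≤ (N:ℝ) := Nat.cast_nonneg N
      linarith
    have hpowle : (‖w + (δ:ℂ)‖ + M) ^ M ≤ (‖w‖ + N + 1) ^ M :=
      pow_le_pow_left₀ (by positivity) hbound M
    have hpowle2 : (‖w‖ + N + 1) ^ M ≤ (‖w‖ + N + 1) ^ N :=
      pow_le_pow_right₀ hbase1 hMN
    have h4 : (1:ℝ) ≤ 4 ^ N := one_le_pow₀ (by norm_num)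
    calc ‖Complex.Gamma z‖
        ≤ (‖w + (δ:ℂ)‖ + M) ^ M * ‖Complex.Gamma (w + (δ:ℂ))‖ := h1
      _ ≤ (‖w‖ + N + 1) ^ N * (65 * (‖w‖ * ‖Complex.Gamma w‖)) := by
          rw [← h3] at *
          apply mul_le_mul (hpowle.trans hpowle2) (h2.trans (by rw [h3])) (norm_nonneg _)
            (by positivity)
      _ = 65 * ((‖w‖ + N + 1) ^ N * ‖w‖) * ‖Complex.Gamma w‖ := by ring
      _ ≤ 65 * 4 ^ N * (‖w‖ + N + 1) ^ (N+1) * ‖Complex.Gamma w‖ := by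
          have : (‖w‖ + N + 1) ^ N * ‖w‖ ≤ (‖w‖ + N + 1) ^ (N+1) := by
            rw [pow_succ]
            apply mul_le_mul_of_nonneg_left hwle (by positivity)
          nlinarith [mul_nonneg (mul_nonneg (by norm_num : (0:ℝ) ≤ 65)
              (sub_nonneg.mpr this)) (norm_nonneg (Complex.Gamma w)),
            mul_nonneg (mul_nonneg (mul_nonneg (by norm_num : (0:ℝ) ≤ 65)
              (sub_nonneg.mpr h4))
              (by positivity : (0:ℝ) ≤ (‖w‖ + N + 1) ^ (N+1)))
              (norm_nonneg (Complex.Gamma w))]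

lemma telescope (m : ℕ) (a : ℂ) (ha : ∀ k : ℕ, a ≠ -(k:ℂ)) :
    (∏ k ∈ Finset.range m, (a + k)) * Complex.Gamma a = Complex.Gamma (a + m) := by
  induction m with
  | zero => simp
  | succ m ih =>
    have hne : a + (m:ℂ) ≠ 0 := by
      intro h
      exact ha m (by linear_combination h)
    have : a + ((m+1 : ℕ):ℂ) = (a + m) + 1 := by push_cast; ring
    rw [this, Complex.Gamma_add_one _ hne, Finset.prod_range_succ, ← ih]
    ring

lemma poly_eval_eq (p : Polynomial ℂ) (hm : p.Monic) (hsf : Squarefree p) (m : ℕ) (r : ℕ → ℂ)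
    (hinj : Function.Injective r) (hroot : ∀ z, p.IsRoot z ↔ ∃ k, k < m ∧ z = r k) (s : ℂ) :
    p.eval s = ∏ k ∈ Finset.range m, (s - r k) := by
  have hsep : p.Separable := PerfectField.separable_iff_squarefree.mpr hsf
  have hnd : p.roots.Nodup := Polynomial.nodup_roots hsep
  have hsp : p.Splits := IsAlgClosed.splits p
  have hfac := Polynomial.Splits.eq_prod_roots_of_monic hsp hm
  set S : Multiset ℂ := (Multiset.range m).map r with hSdef
  have hSnd : S.Nodup := Multiset.Nodup.map hinj (Multiset.nodup_range m)
  have hS : p.roots = S := by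
    rw [Multiset.Nodup.ext hnd hSnd]
    intro z
    rw [Polynomial.mem_roots hm.ne_zero, hroot z, hSdef, Multiset.mem_map]
    constructor
    · rintro ⟨k, hk, rfl⟩
      exact ⟨k, Multiset.mem_range.mpr hk, rfl⟩
    · rintro ⟨k, hk, rfl⟩
      exact ⟨k, Multiset.mem_range.mp hk, rfl⟩
  calc p.eval s = ((p.roots.map fun a => Polynomial.X - Polynomial.C a).prod).eval s := by
        rw [← hfac]
    _ = ((p.roots.map fun a => s - a)).prod := by
        rw [Polynomial.eval_multiset_prod, Multiset.map_map]
        congr 1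
        apply Multiset.map_congr rfl
        intro z _
        simp
    _ = ∏ k ∈ Finset.range m, (s - r k) := by
        rw [hS, hSdef, Multiset.map_map, Finset.prod_eq_multiset_prod, Finset.range_val]
        rfl

set_option maxHeartbeats 1000000 in
/-- Uniform bound for a ratio of Gamma factors, with monic
polynomials `p`, `pv` cancelling the poles of the two Gamma factors in the
strip `|Re s| ≤ n`. -/
theorem stmt_0 (n : ℕ) (hn : 0 < n) :
    ∃ C : ℝ, 0 < C ∧
      ∀ (d : ℕ), (d = 1 ∨ d = 2) →
      ∀ (Q : ℝ), (∃ m : ℕ, Q = m / 2) →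
      ∀ p pv : Polynomial ℂ,
        p.Monic → Squarefree p →
        (∀ z : ℂ, p.IsRoot z ↔
          (|z.re| ≤ (n : ℝ) ∧ ∃ k : ℕ, (d : ℂ) / 2 * ((Q : ℂ) + 1/2 - z) = -(k : ℂ))) →
        pv.Monic → Squarefree pv →
        (∀ z : ℂ, pv.IsRoot z ↔
          (|z.re| ≤ (n : ℝ) ∧ ∃ k : ℕ, (d : ℂ) / 2 * ((Q : ℂ) + 1/2 + z) = -(k : ℂ))) →
        ∀ s : ℂ, |s.re| ≤ (n : ℝ) →
          (¬ ∃ k : ℕ, (d : ℂ) / 2 * ((Q : ℂ) + 1/2 - s) = -(k : ℂ)) →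
          (¬ ∃ k : ℕ, (d : ℂ) / 2 * ((Q : ℂ) + 1/2 + s) = -(k : ℂ)) →
          ‖p.eval s * Complex.Gamma ((d : ℂ) / 2 * ((Q : ℂ) + 1/2 - s))‖ ≤
            C * (1 + ‖p.eval s‖) * ‖(Q : ℂ) + 1 + s + 2 * (n : ℂ)‖ ^ (n * d + 2) *
              ‖pv.eval s * Complex.Gamma ((d : ℂ) / 2 * ((Q : ℂ) + 1/2 + s))‖ := by
  refine ⟨65 * 4 ^ (2*n) * 5 ^ (2*n+1), by positivity, ?_⟩
  intro d hd Q hQ p pv hpm hpsf hproots hpvm hpvsf hpvroots s hs hreg1 hreg2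
  obtain ⟨q, hq⟩ := hQ
  have hd1 : 1 ≤ d := by rcases hd with rfl | rfl <;> norm_num
  have hd2 : d ≤ 2 := by rcases hd with rfl | rfl <;> norm_num
  have hdR : (0:ℝ) < (d:ℝ) := by exact_mod_cast Nat.lt_of_lt_of_le Nat.zero_lt_one hd1
  have hdR1 : (1:ℝ) ≤ (d:ℝ) := by exact_mod_cast hd1
  have hdR2 : (d:ℝ) ≤ 2 := by exact_mod_cast hd2
  have hdC : (d:ℂ) ≠ 0 := by
    simp only [ne_eq, Nat.cast_eq_zero]
    omega
  have hQ0 : (0:ℝ) ≤ Q := by rw [hq]; positivity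
  have hn1 : (1:ℝ) ≤ (n:ℝ) := by exact_mod_cast hn
  set σ : ℝ := s.re with hσdef
  have hσn : -(n:ℝ) ≤ σ ∧ σ ≤ n := abs_le.mp hs
  -- the root points
  set zk : ℕ → ℝ := fun k => Q + 1/2 + 2*k/d with hzk
  have hzkpos : ∀ k, 0 < zk k := by
    intro k
    have : (0:ℝ) ≤ 2*k/d := by positivity
    simp only [hzk]; linarith
  have hzkmono : ∀ j k, j ≤ k → zk j ≤ zk k := by
    intro j k hjk
    simp only [hzk]
    have : (j:ℝ) ≤ (k:ℝ) := by exact_mod_cast hjk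
    have h2 : 2*(j:ℝ)/d ≤ 2*(k:ℝ)/d := by gcongr
    linarith
  have hexists : ∃ k, ¬ (zk k ≤ n) := by
    refine ⟨n+1, ?_⟩
    push_neg
    simp only [hzk]
    have h1 : ((n:ℝ)+1) ≤ 2*((n+1:ℕ):ℝ)/d := by
      rw [le_div_iff₀ hdR]
      push_cast
      nlinarith
    push_cast at h1 ⊢
    linarith
  set m : ℕ := Nat.find hexists with hmdef
  have hklt : ∀ k, k < m → zk k ≤ n := by
    intro k hk
    have := Nat.find_min hexists hk
    simpa using this
  have hnm : (n:ℝ) < zk m := by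
    have h := Nat.find_spec hexists
    rw [← hmdef] at h
    push_neg at h
    exact h
  have hm_le : m ≤ n + 1 := by
    by_contra h
    push_neg at h
    have h1 := hklt (n+1) h
    simp only [hzk] at h1
    have h2 : ((n:ℝ)+1) ≤ 2*((n+1:ℕ):ℝ)/d := by
      rw [le_div_iff₀ hdR]
      push_cast
      nlinarith
    push_cast at h1 h2
    linarith
  -- lattice: zk m ≥ n + 1/2
  have hlat : (n:ℝ) + 1/2 ≤ zk m := by
    obtain ⟨r, hr⟩ : ∃ r : ℕ, (r:ℝ) = 2 * zk m := by
      rcases hd with rfl | rfl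
      · refine ⟨q + 1 + 4*m, ?_⟩
        simp only [hzk, hq]
        push_cast
        ring
      · refine ⟨q + 1 + 2*m, ?_⟩
        simp only [hzk, hq]
        push_cast
        ring
    have h2n : (2*n : ℝ) < r := by rw [hr]; linarith
    have h2n' : 2*n < r := by exact_mod_cast h2n
    have : 2*n + 1 ≤ r := h2n'
    have : (2*(n:ℝ) + 1) ≤ (r:ℝ) := by exact_mod_cast this
    rw [hr] at this
    push_cast at this ⊢
    simp only [hzk] at this ⊢
    linarith only [this]
  -- complex versions
  set a : ℂ := (d:ℂ)/2 * ((Q:ℂ) + 1/2 - s) with ha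
  set b : ℂ := (d:ℂ)/2 * ((Q:ℂ) + 1/2 + s) with hb
  have hd2C : ((d:ℂ)/2) = (((d:ℝ)/2 : ℝ) : ℂ) := by push_cast; ring
  have hd2ne : ((d:ℂ)/2) ≠ 0 := by
    apply div_ne_zero hdC (by norm_num)
  have hzkC : ∀ k : ℕ, ((zk k : ℝ) : ℂ) = (Q:ℂ) + 1/2 + 2*(k:ℂ)/(d:ℂ) := by
    intro k
    simp only [hzk]
    push_cast
    ring
  have hsolve1 : ∀ (z : ℂ) (k : ℕ),
      ((d:ℂ)/2 * ((Q:ℂ)+1/2-z) = -(k:ℂ)) ↔ z = ((zk k : ℝ):ℂ) := by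
    intro z k
    rw [hzkC]
    constructor
    · intro h
      have h2 : (Q:ℂ)+1/2-z = -(k:ℂ) / ((d:ℂ)/2) := by
        rw [eq_div_iff hd2ne, mul_comm]
        exact h
      have h3 : z = (Q:ℂ)+1/2 + (k:ℂ) / ((d:ℂ)/2) := by
        linear_combination -h2
      rw [h3]
      congr 1
      field_simp
    · intro h
      rw [h]
      field_simp
      ring
  have hsolve2 : ∀ (z : ℂ) (k : ℕ),
      ((d:ℂ)/2 * ((Q:ℂ)+1/2+z) = -(k:ℂ)) ↔ z = -((zk k : ℝ):ℂ) := by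
    intro z k
    rw [hzkC]
    constructor
    · intro h
      have h2 : (Q:ℂ)+1/2+z = -(k:ℂ) / ((d:ℂ)/2) := by
        rw [eq_div_iff hd2ne, mul_comm]
        exact h
      have h3 : z = -((Q:ℂ)+1/2) - (k:ℂ) / ((d:ℂ)/2) := by
        linear_combination h2
      rw [h3]
      field_simp
      ring
    · intro h
      rw [h]
      field_simp
      ring
  -- index bound in terms of m
  have hidx : ∀ k : ℕ, (zk k ≤ n ↔ k < m) := by
    intro k
    constructor
    · intro hk
      by_contra hkm
      push_neg at hkm
      have := hzkmono m k hkm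
      linarith
    · exact hklt k
  -- root descriptions
  have hps : p.eval s = ∏ k ∈ Finset.range m, (s - ((zk k : ℝ):ℂ)) := by
    apply poly_eval_eq p hpm hpsf m _ ?_ ?_ s
    · intro j k hjk
      have hjk' : ((zk j : ℝ):ℂ) = ((zk k : ℝ):ℂ) := hjk
      have h1 : zk j = zk k := by exact_mod_cast hjk'
      simp only [hzk] at h1
      have h3 : 2*(j:ℝ)/d = 2*(k:ℝ)/d := by linarith
      field_simp at h3
      exact_mod_cast h3
    · intro z
      rw [hproots z]
      constructor
      · rintro ⟨habs, k, hk⟩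
        refine ⟨k, ?_, (hsolve1 z k).mp hk⟩
        rw [← hidx k]
        have hz := (hsolve1 z k).mp hk
        have : z.re = zk k := by rw [hz]; simp
        rw [this] at habs
        have := (abs_le.mp habs).2
        linarith
      · rintro ⟨k, hk, rfl⟩
        refine ⟨?_, k, (hsolve1 _ k).mpr rfl⟩
        have h1 : zk k ≤ n := (hidx k).mpr hk
        have h2 : 0 < zk k := hzkpos k
        simp only [Complex.ofReal_re]
        rw [abs_of_pos h2]
        exact h1
  have hpvs : pv.eval s = ∏ k ∈ Finset.range m, (s + ((zk k : ℝ):ℂ)) := by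
    have : ∀ k ∈ Finset.range m, s + ((zk k : ℝ):ℂ) = s - (-((zk k : ℝ):ℂ)) := by
      intro k _; ring
    rw [Finset.prod_congr rfl this]
    apply poly_eval_eq pv hpvm hpvsf m _ ?_ ?_ s
    · intro j k hjk
      have hjk0 : -((zk j : ℝ):ℂ) = -((zk k : ℝ):ℂ) := hjk
      have hjk' : ((zk j : ℝ):ℂ) = ((zk k : ℝ):ℂ) := neg_inj.mp hjk0
      have h1 : zk j = zk k := by exact_mod_cast hjk'
      simp only [hzk] at h1
      have h3 : 2*(j:ℝ)/d = 2*(k:ℝ)/d := by linarith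
      field_simp at h3
      exact_mod_cast h3
    · intro z
      rw [hpvroots z]
      constructor
      · rintro ⟨habs, k, hk⟩
        refine ⟨k, ?_, (hsolve2 z k).mp hk⟩
        rw [← hidx k]
        have hz := (hsolve2 z k).mp hk
        have : z.re = -(zk k) := by rw [hz]; simp
        rw [this] at habs
        have := (abs_le.mp habs).1
        linarith
      · rintro ⟨k, hk, rfl⟩
        refine ⟨?_, k, (hsolve2 _ k).mpr rfl⟩
        have h1 : zk k ≤ n := (hidx k).mpr hk
        have h2 : 0 < zk k := hzkpos k
        simp only [Complex.neg_re, Complex.ofReal_re]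
        rw [abs_neg, abs_of_pos h2]
        exact h1
  -- Gamma telescoping
  have hreg1' : ∀ k : ℕ, a ≠ -(k:ℂ) := by
    intro k hk
    exact hreg1 ⟨k, hk⟩
  have hreg2' : ∀ k : ℕ, b ≠ -(k:ℂ) := by
    intro k hk
    exact hreg2 ⟨k, hk⟩
  have hinv : (2:ℂ)/d * ((d:ℂ)/2) = 1 := by
    field_simp
  have hfack1 : ∀ k ∈ Finset.range m, s - ((zk k:ℝ):ℂ) = -((2:ℂ)/d) * (a + k) := by
    intro k _
    rw [hzkC, ha]
    linear_combination ((Q:ℂ) + 1/2 - s) * hinv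
  have hfack2 : ∀ k ∈ Finset.range m, s + ((zk k:ℝ):ℂ) = ((2:ℂ)/d) * (b + k) := by
    intro k _
    rw [hzkC, hb]
    linear_combination -((Q:ℂ) + 1/2 + s) * hinv
  have hP : p.eval s * Complex.Gamma a = (-((2:ℂ)/d))^m * Complex.Gamma (a + m) := by
    rw [hps, Finset.prod_congr rfl hfack1, Finset.prod_mul_distrib, Finset.prod_const,
      Finset.card_range, mul_assoc, telescope m a hreg1']
  have hPv : pv.eval s * Complex.Gamma b = (((2:ℂ)/d))^m * Complex.Gamma (b + m) := by
    rw [hpvs, Finset.prod_congr rfl hfack2, Finset.prod_mul_distrib, Finset.prod_const,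
      Finset.card_range, mul_assoc, telescope m b hreg2']
  -- real and imaginary parts
  have hQhalf : (Q:ℂ) + 1/2 = ((Q + 1/2 : ℝ):ℂ) := by push_cast; ring
  have hare : a.re = (d:ℝ)/2 * (Q + 1/2 - σ) := by
    rw [ha, hQhalf, hd2C, Complex.re_ofReal_mul, Complex.sub_re, Complex.ofReal_re, hσdef]
  have haim : a.im = (d:ℝ)/2 * (- s.im) := by
    rw [ha, hQhalf, hd2C, Complex.im_ofReal_mul, Complex.sub_im, Complex.ofReal_im]
    ring
  have hbre : b.re = (d:ℝ)/2 * (Q + 1/2 + σ) := by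
    rw [hb, hQhalf, hd2C, Complex.re_ofReal_mul, Complex.add_re, Complex.ofReal_re, hσdef]
  have hbim : b.im = (d:ℝ)/2 * s.im := by
    rw [hb, hQhalf, hd2C, Complex.im_ofReal_mul, Complex.add_im, Complex.ofReal_im]
    ring
  have hαre : (a + (m:ℂ)).re = (d:ℝ)/2 * (zk m - σ) := by
    rw [Complex.add_re, hare, Complex.natCast_re]
    simp only [hzk]
    field_simp
    ring
  have hβre : (b + (m:ℂ)).re = (d:ℝ)/2 * (zk m + σ) := by
    rw [Complex.add_re, hbre, Complex.natCast_re]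
    simp only [hzk]
    field_simp
    ring
  have hα4 : 1/4 ≤ (a + (m:ℂ)).re := by
    rw [hαre]
    nlinarith [hlat, hσn.2, hdR1]
  have hβ4 : 1/4 ≤ (b + (m:ℂ)).re := by
    rw [hβre]
    nlinarith [hlat, hσn.1, hdR1]
  have him : (a + (m:ℂ)).im = ((starRingEnd ℂ) (b + (m:ℂ))).im := by
    rw [Complex.conj_im, Complex.add_im, Complex.add_im, haim, hbim,
      Complex.natCast_im]
    ring
  have hconjre : ((starRingEnd ℂ) (b + (m:ℂ))).re = (b + (m:ℂ)).re := Complex.conj_re _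
  have hdiff : |(a + (m:ℂ)).re - ((starRingEnd ℂ) (b + (m:ℂ))).re| ≤ ((n*d : ℕ):ℝ) := by
    rw [hconjre, hαre, hβre]
    have heq : (d:ℝ)/2 * (zk m - σ) - (d:ℝ)/2 * (zk m + σ) = -((d:ℝ) * σ) := by ring
    rw [heq, abs_neg, abs_mul, abs_of_pos hdR]
    push_cast
    calc (d:ℝ) * |σ| ≤ (d:ℝ) * n := mul_le_mul_of_nonneg_left hs hdR.le
      _ = (n:ℝ) * d := by ring
  have hmain := main_compare (n*d) (a + (m:ℂ)) ((starRingEnd ℂ) (b + (m:ℂ))) him hα4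
    (by rw [hconjre]; exact hβ4) hdiff
  have hGc : ‖Complex.Gamma ((starRingEnd ℂ) (b + (m:ℂ)))‖ = ‖Complex.Gamma (b + (m:ℂ))‖ := by
    rw [Complex.Gamma_conj]
    exact RCLike.norm_conj _
  have hNc : ‖(starRingEnd ℂ) (b + (m:ℂ))‖ = ‖b + (m:ℂ)‖ := RCLike.norm_conj _
  rw [hGc, hNc] at hmain
  -- bounds on R
  set R : ℝ := ‖(Q:ℂ) + 1 + s + 2*(n:ℂ)‖ with hRdef
  have hR1 : Q + n + 1 ≤ R := by
    have h1 := Complex.re_le_norm ((Q:ℂ) + 1 + s + 2*(n:ℂ))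
    have hre : ((Q:ℂ) + 1 + s + 2*(n:ℂ)).re = Q + 1 + σ + 2*n := by
      simp [hσdef]
    rw [hre] at h1
    rw [hRdef]
    linarith [hσn.1]
  have hR2 : |s.im| ≤ R := by
    have h1 := Complex.abs_im_le_norm ((Q:ℂ) + 1 + s + 2*(n:ℂ))
    have him2 : ((Q:ℂ) + 1 + s + 2*(n:ℂ)).im = s.im := by simp
    rw [him2] at h1
    rw [hRdef]
    exact h1
  have hR0 : 1 ≤ R := by linarith
  have hmR : (m:ℝ) ≤ n + 1 := by exact_mod_cast hm_le
  have hndR : ((n*d : ℕ):ℝ) ≤ 2*n := by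
    push_cast
    nlinarith [hn1]
  have hβnorm : ‖b + (m:ℂ)‖ + ((n*d:ℕ):ℝ) + 1 ≤ 5*R := by
    have h1 : ‖b + (m:ℂ)‖ ≤ ‖b‖ + m := by
      calc ‖b + (m:ℂ)‖ ≤ ‖b‖ + ‖(m:ℂ)‖ := norm_add_le _ _
        _ = ‖b‖ + m := by simp
    have h2 : ‖b‖ ≤ Q + 1/2 + ‖s‖ := by
      rw [hb, hQhalf, hd2C, norm_mul, Complex.norm_real, Real.norm_eq_abs,
        abs_of_pos (by linarith : (0:ℝ) < (d:ℝ)/2)]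
      calc (d:ℝ)/2 * ‖((Q + 1/2:ℝ):ℂ) + s‖ ≤ 1 * ‖((Q + 1/2:ℝ):ℂ) + s‖ := by
            apply mul_le_mul_of_nonneg_right (by linarith) (norm_nonneg _)
        _ = ‖((Q + 1/2:ℝ):ℂ) + s‖ := by ring
        _ ≤ ‖((Q + 1/2:ℝ):ℂ)‖ + ‖s‖ := norm_add_le _ _
        _ = Q + 1/2 + ‖s‖ := by
            rw [Complex.norm_real, Real.norm_eq_abs, abs_of_pos (by linarith)]
    have h3 : ‖s‖ ≤ (n:ℝ) + |s.im| := by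
      have := Complex.norm_le_abs_re_add_abs_im s
      rw [← hσdef] at this
      linarith
    linarith
  -- final chain on Gammas
  have hch : ‖Complex.Gamma (a + (m:ℂ))‖ ≤
      (65 * 4 ^ (2*n) * 5 ^ (2*n+1)) * R ^ (n*d+2) * ‖Complex.Gamma (b + (m:ℂ))‖ := by
    have hnd2n : n*d ≤ 2*n := by
      have h := Nat.mul_le_mul_left n hd2
      omega
    have hG0 := norm_nonneg (Complex.Gamma (b + (m:ℂ)))
    calc ‖Complex.Gamma (a + (m:ℂ))‖
        ≤ 65 * 4 ^ (n*d) * (‖b + (m:ℂ)‖ + ((n*d:ℕ):ℝ) + 1) ^ (n*d+1) *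
            ‖Complex.Gamma (b + (m:ℂ))‖ := hmain
      _ ≤ 65 * 4 ^ (2*n) * (5*R) ^ (n*d+1) * ‖Complex.Gamma (b + (m:ℂ))‖ := by
          gcongr
          all_goals first
            | exact hnd2n
            | exact hβnorm
            | positivity
            | norm_num
      _ = 65 * 4 ^ (2*n) * 5 ^ (n*d+1) * R ^ (n*d+1) * ‖Complex.Gamma (b + (m:ℂ))‖ := by
          rw [mul_pow]; ring
      _ ≤ 65 * 4 ^ (2*n) * 5 ^ (2*n+1) * R ^ (n*d+2) * ‖Complex.Gamma (b + (m:ℂ))‖ := by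
          gcongr
          all_goals first
            | exact hR0
            | exact Nat.add_le_add_right hnd2n 1
            | omega
            | norm_num
  -- conclude
  rw [hP, hPv, norm_mul, norm_mul, norm_pow, norm_pow, norm_neg]
  set c : ℝ := ‖(2:ℂ)/(d:ℂ)‖ ^ m with hcdef
  have hc0 : (0:ℝ) ≤ c := by positivity
  have hA0 : (0:ℝ) ≤ 65 * 4 ^ (2*n) * 5 ^ (2*n+1) * R ^ (n*d+2) *
      (c * ‖Complex.Gamma (b + (m:ℂ))‖) := by positivity
  calc c * ‖Complex.Gamma (a + (m:ℂ))‖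
      ≤ c * ((65 * 4 ^ (2*n) * 5 ^ (2*n+1)) * R ^ (n*d+2) * ‖Complex.Gamma (b + (m:ℂ))‖) :=
        mul_le_mul_of_nonneg_left hch hc0
    _ = 65 * 4 ^ (2*n) * 5 ^ (2*n+1) * R ^ (n*d+2) *
        (c * ‖Complex.Gamma (b + (m:ℂ))‖) := by ring
    _ ≤ 65 * 4 ^ (2*n) * 5 ^ (2*n+1) * (1 + ‖p.eval s‖) * R ^ (n*d+2) *
        (c * ‖Complex.Gamma (b + (m:ℂ))‖) := by
        nlinarith [mul_nonneg (norm_nonneg (p.eval s)) hA0]
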